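/- Local-to-nonlocal estimate for the kinetic weight, velocity-decay version: let g > 0, E_e ∈ ℝ, and E, B : ℝ×ℝ³ → ℝ³, and define the kinetic weight α as in the context. Then for every δ > 0 there is a constant C_δ > 0, depending only on δ, such that for every (t,x) with x₃ > 0 at which g − E_e − E₃(t,x₁,x₂,0) − (v̂ × B(t,x₁,x₂,0))₃ ≥ 0 for all v ∈ ℝ³, one has ∫_{ℝ³} (1 + |v|^{4+δ})^{−1} α(t,x,v)^{−1} dv ≤ C_δ · ln(1 + 1/x₃). -/

import Mathlib

open MeasureTheory Set

noncomputable section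

/-- Physical space `ℝ³`, realized as functions `Fin 3 → ℝ`. -/
abbrev V3 : Type := Fin 3 → ℝ

/-- Euclidean inner product on `ℝ³`. -/
def dot3 (a b : V3) : ℝ := a 0 * b 0 + a 1 * b 1 + a 2 * b 2

/-- Euclidean norm on `ℝ³`. -/
def enorm3 (a : V3) : ℝ := Real.sqrt (dot3 a a)

/-- Cross product on `ℝ³`. -/
def cross3 (a b : V3) : V3 :=
  ![a 1 * b 2 - a 2 * b 1, a 2 * b 0 - a 0 * b 2, a 0 * b 1 - a 1 * b 0]

/-- `⟨v⟩ = √(1 + |v|²)`. -/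
def jap (v : V3) : ℝ := Real.sqrt (1 + dot3 v v)

/-- Relativistic velocity `v̂ = v / ⟨v⟩`. -/
def vhat (v : V3) : V3 := (jap v)⁻¹ • v

/-- The open upper half space `Ω = {x ∈ ℝ³ : x₃ > 0}`. -/
def halfSpace : Set V3 := {x : V3 | 0 < x 2}

/-- Embedding of the boundary `∂Ω ≃ ℝ²` into `ℝ³`. -/
def bdryPt (y : ℝ × ℝ) : V3 := ![y.1, y.2, 0]

/-- Projection `(x₁,x₂,x₃) ↦ (x₁,x₂,0)` onto the boundary. -/
def proj0 (x : V3) : V3 := ![x 0, x 1, 0]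

/-- Reflection `x̄ = (x₁,x₂,−x₃)`. -/
def refl3 (x : V3) : V3 := ![x 0, x 1, -(x 2)]

/-- Time derivative `∂ₜ` of a space-time function. -/
def pdt (f : ℝ × V3 → ℝ) : ℝ × V3 → ℝ := fun q => fderiv ℝ f q (1, 0)

/-- Spatial partial derivative `∂_{xᵢ}` of a space-time function. -/
def pdx (i : Fin 3) (f : ℝ × V3 → ℝ) : ℝ × V3 → ℝ := fun q => fderiv ℝ f q (0, Pi.single i 1)

/-- Partial derivative `∂_{xᵢ}` of a function on `ℝ³`. -/
def sdx (i : Fin 3) (u : V3 → ℝ) : V3 → ℝ := fun x => fderiv ℝ u x (Pi.single i 1)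

/-- `i`-th component of a space-time vector field. -/
def comp3 (F : ℝ × V3 → V3) (i : Fin 3) : ℝ × V3 → ℝ := fun q => F q i

/-- Spatial divergence of a space-time vector field. -/
def divX (F : ℝ × V3 → V3) (q : ℝ × V3) : ℝ := ∑ i : Fin 3, pdx i (comp3 F i) q

/-- Spatial curl of a space-time vector field. -/
def curlX (F : ℝ × V3 → V3) (q : ℝ × V3) : V3 :=
  ![pdx 1 (comp3 F 2) q - pdx 2 (comp3 F 1) q,
    pdx 2 (comp3 F 0) q - pdx 0 (comp3 F 2) q,
    pdx 0 (comp3 F 1) q - pdx 1 (comp3 F 0) q]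

/-- Curl of a vector field on `ℝ³`. -/
def curlS (F : V3 → V3) (x : V3) : V3 :=
  ![sdx 1 (fun z => F z 2) x - sdx 2 (fun z => F z 1) x,
    sdx 2 (fun z => F z 0) x - sdx 0 (fun z => F z 2) x,
    sdx 0 (fun z => F z 1) x - sdx 1 (fun z => F z 0) x]

/-- Divergence of a vector field on `ℝ³`. -/
def divS (F : V3 → V3) (x : V3) : ℝ := ∑ i : Fin 3, sdx i (fun z => F z i) x

/-- Spatial Laplacian of a space-time function. -/
def lapST (f : ℝ × V3 → ℝ) (q : ℝ × V3) : ℝ := ∑ i : Fin 3, pdx i (pdx i f) q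

/-- Laplacian of a function on `ℝ³`. -/
def lapS (u : V3 → ℝ) (x : V3) : ℝ := ∑ i : Fin 3, sdx i (sdx i u) x

/-- Open space-time domain `(0,T) × Ω`. -/
def stDom (T : ℝ) : Set (ℝ × V3) := Ioo (0 : ℝ) T ×ˢ halfSpace

/-- Closed space-time domain `[0,T] × Ω̄`. -/
def stDomCl (T : ℝ) : Set (ℝ × V3) := Icc (0 : ℝ) T ×ˢ closure halfSpace

/-- Lateral boundary domain `(0,T) × ∂Ω`, with `∂Ω ≃ ℝ²`. -/
def bDom (T : ℝ) : Set (ℝ × (ℝ × ℝ)) := Ioo (0 : ℝ) T ×ˢ (univ : Set (ℝ × ℝ))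

/-- The third standard basis vector `e₃`. -/
def e3v : V3 := ![0, 0, 1]

/-- The Lorentz force `𝔉(t,x,v) = E + E_e e₃ + v̂ × (B + B_e e₃) − g e₃`. -/
def lorentz (E B : ℝ × V3 → V3) (Ee Be g : ℝ) (t : ℝ) (x v : V3) : V3 :=
  E (t, x) + Ee • e3v + cross3 (vhat v) (B (t, x) + Be • e3v) - g • e3v

/-- The kinetic weight
`α(t,x,v) = √( x₃² + v̂₃² + 2(g − E_e − E₃(t,x₁,x₂,0) − (v̂ × B(t,x₁,x₂,0))₃) x₃/⟨v⟩ )`. -/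
def kinWeight (E B : ℝ × V3 → V3) (Ee g : ℝ) (t : ℝ) (x v : V3) : ℝ :=
  Real.sqrt ((x 2) ^ 2 + (vhat v 2) ^ 2
    + 2 * (g - Ee - E (t, proj0 x) 2 - cross3 (vhat v) (B (t, proj0 x)) 2) * x 2 / jap v)


/-! ### Auxiliary lemmas -/

lemma lintegral_pi3 (f₀ f₁ f₂ : ℝ → ENNReal) (h₀ : Measurable f₀) (h₁ : Measurable f₁)
    (h₂ : Measurable f₂) :
    ∫⁻ v : V3, f₀ (v 0) * f₁ (v 1) * f₂ (v 2)
      = (∫⁻ s, f₀ s) * (∫⁻ s, f₁ s) * (∫⁻ s, f₂ s) := by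
  have hF : Measurable fun v : V3 => f₀ (v 0) * f₁ (v 1) * f₂ (v 2) :=
    ((h₀.comp (measurable_pi_apply _)).mul (h₁.comp (measurable_pi_apply _))).mul
      (h₂.comp (measurable_pi_apply _))
  have h2 : Measurable fun w : Fin 2 → ℝ => f₁ (w 0) * f₂ (w 1) :=
    (h₁.comp (measurable_pi_apply _)).mul (h₂.comp (measurable_pi_apply _))
  rw [← ((volume_preserving_piFinSuccAbove (fun _ : Fin 3 => ℝ) 0).symm).lintegral_comp hF]
  have e1 : (∫⁻ z : ℝ × (Fin 2 → ℝ),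
      f₀ (((MeasurableEquiv.piFinSuccAbove (fun _ : Fin 3 => ℝ) 0).symm z) 0)
        * f₁ (((MeasurableEquiv.piFinSuccAbove (fun _ : Fin 3 => ℝ) 0).symm z) 1)
        * f₂ (((MeasurableEquiv.piFinSuccAbove (fun _ : Fin 3 => ℝ) 0).symm z) 2))
      = ∫⁻ z : ℝ × (Fin 2 → ℝ), f₀ z.1 * (f₁ (z.2 0) * f₂ (z.2 1)) := by
    congr 1; ext z; obtain ⟨x, w⟩ := z; rw [mul_assoc]; rfl
  rw [e1, Measure.volume_eq_prod, lintegral_prod_mul (h₀.aemeasurable) (h2.aemeasurable),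
    ← ((volume_preserving_finTwoArrow ℝ).symm).lintegral_comp h2]
  have e2 : (∫⁻ z : ℝ × ℝ,
      f₁ ((MeasurableEquiv.finTwoArrow.symm z : Fin 2 → ℝ) 0)
        * f₂ ((MeasurableEquiv.finTwoArrow.symm z : Fin 2 → ℝ) 1))
      = ∫⁻ z : ℝ × ℝ, f₁ z.1 * f₂ z.2 := rfl
  rw [e2, Measure.volume_eq_prod, lintegral_prod_mul (h₁.aemeasurable) (h₂.aemeasurable),
    mul_assoc]

lemma mt_meas (β : ℝ) : Measurable fun s : ℝ => ENNReal.ofReal ((max s 1) ^ (-(1+β))) :=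
  (((continuous_id.max continuous_const).rpow_const fun s =>
    Or.inl (by positivity)).measurable).ennreal_ofReal

lemma tail_lint {β : ℝ} (hβ : 0 < β) :
    (∫⁻ s in Ioi (1:ℝ), ENNReal.ofReal ((max s 1) ^ (-(1+β)))) = ENNReal.ofReal (1/β) := by
  have ha : -(1+β) < -1 := by linarith
  have hcg : ∀ s ∈ Ioi (1:ℝ), ENNReal.ofReal ((max s 1) ^ (-(1+β)))
      = ENNReal.ofReal (s ^ (-(1+β))) := fun s hs => by rw [max_eq_left (le_of_lt hs)]
  rw [setLIntegral_congr_fun measurableSet_Ioi (fun s hs => hcg s hs)]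
  have hint := integrableOn_Ioi_rpow_of_lt ha one_pos
  rw [← ofReal_integral_eq_lintegral_ofReal hint
    ((ae_restrict_mem measurableSet_Ioi).mono fun s hs =>
      Real.rpow_nonneg (le_of_lt (lt_trans one_pos hs)) _),
    integral_Ioi_rpow_of_lt ha one_pos, Real.one_rpow]
  congr 1
  rw [show -(1+β) + 1 = -β by ring]
  field_simp

lemma q_meas (β : ℝ) : Measurable fun s : ℝ => (1+|s|) ^ (-(1+β)) :=
  ((continuous_const.add continuous_abs).rpow_const fun s =>
    Or.inl (add_pos_of_pos_of_nonneg one_pos (abs_nonneg s)).ne').measurable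

lemma q_lint {β : ℝ} (hβ : 0 < β) :
    (∫⁻ s : ℝ, ENNReal.ofReal ((1+|s|) ^ (-(1+β)))) ≤ ENNReal.ofReal (2 + 2/β) := by
  have hm2 : Measurable ((Ioi (1:ℝ)).indicator (fun t => ENNReal.ofReal ((max t 1) ^ (-(1+β))))) :=
    (mt_meas β).indicator measurableSet_Ioi
  have hkey : ∀ s : ℝ, ENNReal.ofReal ((1+|s|) ^ (-(1+β)))
      ≤ (Icc (-1:ℝ) 1).indicator (fun _ => 1) s
        + ((Ioi (1:ℝ)).indicator (fun t => ENNReal.ofReal ((max t 1) ^ (-(1+β)))) s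
          + ((Ioi (1:ℝ)).indicator (fun t => ENNReal.ofReal ((max t 1) ^ (-(1+β))))) (-s)) := by
    intro s
    rcases le_or_gt |s| 1 with h | h
    · refine le_trans ?_ (le_add_right le_rfl)
      rw [indicator_of_mem (show s ∈ Icc (-1:ℝ) 1 from abs_le.mp h)]
      simpa using ENNReal.ofReal_le_ofReal
        (Real.rpow_le_one_of_one_le_of_nonpos (by simp [abs_nonneg]) (by linarith))
    · rcases lt_or_ge 1 s with hs | hs
      · refine le_trans ?_ (le_add_left (le_add_right le_rfl))
        rw [indicator_of_mem (mem_Ioi.mpr hs)]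
        refine ENNReal.ofReal_le_ofReal (Real.rpow_le_rpow_of_nonpos (by positivity) ?_
          (by linarith))
        rw [max_eq_left (le_of_lt hs), abs_of_pos (by linarith)]; linarith
      · have hs' : 1 < -s := by rcases abs_cases s with ⟨h1, h2⟩ | ⟨h1, h2⟩ <;> linarith
        refine le_trans ?_ (le_add_left (le_add_left le_rfl))
        rw [indicator_of_mem (mem_Ioi.mpr hs')]
        refine ENNReal.ofReal_le_ofReal (Real.rpow_le_rpow_of_nonpos (by positivity) ?_
          (by linarith))
        rw [max_eq_left (le_of_lt hs'), abs_of_neg (by linarith)]; linarith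
  refine le_trans (lintegral_mono hkey) ?_
  rw [lintegral_add_left (measurable_const.indicator measurableSet_Icc),
    lintegral_add_left hm2]
  have T1 : (∫⁻ s : ℝ, (Icc (-1:ℝ) 1).indicator (fun _ => (1:ENNReal)) s)
      = ENNReal.ofReal 2 := by
    rw [lintegral_indicator measurableSet_Icc, setLIntegral_one, Real.volume_Icc]
    norm_num
  have T2 : (∫⁻ s : ℝ, (Ioi (1:ℝ)).indicator
        (fun t => ENNReal.ofReal ((max t 1) ^ (-(1+β)))) s) = ENNReal.ofReal (1/β) := by
    rw [lintegral_indicator measurableSet_Ioi, tail_lint hβ]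
  have T3 : (∫⁻ s : ℝ, ((Ioi (1:ℝ)).indicator
        (fun t => ENNReal.ofReal ((max t 1) ^ (-(1+β))))) (-s)) = ENNReal.ofReal (1/β) := by
    rw [(Measure.measurePreserving_neg (volume : Measure ℝ)).lintegral_comp hm2]
    rw [lintegral_indicator measurableSet_Ioi, tail_lint hβ]
  rw [T1, T2, T3, ← ENNReal.ofReal_add (div_nonneg one_pos.le hβ.le)
      (div_nonneg one_pos.le hβ.le),
    ← ENNReal.ofReal_add (by norm_num) (by positivity)]
  exact ENNReal.ofReal_le_ofReal (le_of_eq (by ring))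

/-- The cutoff weight used to dominate the inverse kinetic weight. -/
def hcut (a s : ℝ) : ℝ := if |s| ≤ a then a⁻¹ else |s|⁻¹

lemma hcut_nonneg {a : ℝ} (ha : 0 < a) (s : ℝ) : 0 ≤ hcut a s := by
  unfold hcut; split <;> positivity

lemma hcut_le {a : ℝ} (ha : 0 < a) (s : ℝ) : hcut a s ≤ 2 * (a + |s|)⁻¹ := by
  unfold hcut
  have habs := abs_nonneg s
  split
  · rw [← div_eq_mul_inv, ← one_div, div_le_div_iff₀ ha (by positivity)]
    linarith
  · next h =>
      push_neg at h
      rw [← div_eq_mul_inv, ← one_div, div_le_div_iff₀ (by linarith) (by positivity)]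
      linarith

lemma hcut_meas (a : ℝ) : Measurable (hcut a) :=
  Measurable.ite (measurableSet_le measurable_abs measurable_const)
    measurable_const measurable_abs.inv

lemma mid_int {a : ℝ} (ha : 0 < a) :
    (∫ s in Icc (-1:ℝ) 1, 2 * (a + |s|)⁻¹) = 4 * Real.log (1 + 1/a) := by
  have hcont : Continuous fun s : ℝ => 2 * (a + |s|)⁻¹ :=
    continuous_const.mul ((continuous_const.add continuous_abs).inv₀ fun s =>
      (add_pos_of_pos_of_nonneg ha (abs_nonneg s)).ne')
  have h1 : (∫ s in Icc (-1:ℝ) 1, 2 * (a + |s|)⁻¹) = ∫ s in (-1:ℝ)..1, 2 * (a + |s|)⁻¹ := by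
    rw [intervalIntegral.integral_of_le (by norm_num), integral_Icc_eq_integral_Ioc]
  have hsplit : (∫ s in (-1:ℝ)..1, 2 * (a + |s|)⁻¹)
      = (∫ s in (-1:ℝ)..0, 2 * (a + |s|)⁻¹) + ∫ s in (0:ℝ)..1, 2 * (a + |s|)⁻¹ :=
    (intervalIntegral.integral_add_adjacent_intervals
      (hcont.intervalIntegrable _ _) (hcont.intervalIntegrable _ _)).symm
  have hcore : (∫ s in (0:ℝ)..1, 2 * (a + s)⁻¹) = 2 * Real.log (1 + 1/a) := by
    rw [intervalIntegral.integral_const_mul,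
      show (fun s : ℝ => (a + s)⁻¹) = fun s => (fun t : ℝ => t⁻¹) (a + s) from rfl,
      intervalIntegral.integral_comp_add_left (fun t : ℝ => t⁻¹) a,
      add_zero, integral_inv_of_pos ha (by linarith)]
    congr 2
    field_simp
  have hR : (∫ s in (0:ℝ)..1, 2 * (a + |s|)⁻¹) = 2 * Real.log (1 + 1/a) := by
    rw [← hcore]
    apply intervalIntegral.integral_congr
    intro s hs
    rw [uIcc_of_le (by norm_num)] at hs
    show 2 * (a + |s|)⁻¹ = 2 * (a + s)⁻¹
    rw [abs_of_nonneg hs.1]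
  have hL : (∫ s in (-1:ℝ)..0, 2 * (a + |s|)⁻¹) = 2 * Real.log (1 + 1/a) := by
    have e1 : (∫ s in (-1:ℝ)..0, 2 * (a + |s|)⁻¹) = ∫ s in (-1:ℝ)..0, 2 * (a + -s)⁻¹ := by
      apply intervalIntegral.integral_congr
      intro s hs
      rw [uIcc_of_le (by norm_num)] at hs
      show 2 * (a + |s|)⁻¹ = 2 * (a + -s)⁻¹
      rw [abs_of_nonpos hs.2]
    rw [e1, show (fun s : ℝ => 2 * (a + -s)⁻¹)
        = fun s => (fun t : ℝ => 2 * (a + t)⁻¹) (-s) from rfl,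
      intervalIntegral.integral_comp_neg (fun t : ℝ => 2 * (a + t)⁻¹),
      show (-0:ℝ) = 0 by norm_num, show (-(-1):ℝ) = 1 by norm_num]
    exact hcore
  rw [h1, hsplit, hR, hL]; ring

lemma inv_add_one_le_log {a : ℝ} (ha : 0 < a) : (a+1)⁻¹ ≤ Real.log (1 + 1/a) := by
  have h := Real.one_sub_inv_le_log_of_pos (show (0:ℝ) < 1 + 1/a by positivity)
  have e : 1 - (1 + 1/a)⁻¹ = (a+1)⁻¹ := by
    rw [show (1:ℝ) + 1/a = (a+1)/a by field_simp]
    rw [inv_div]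
    field_simp
    ring
  linarith [e ▸ h]

lemma main1d {β a : ℝ} (hβ : 0 < β) (ha : 0 < a)
    (hq : (∫⁻ s : ℝ, ENNReal.ofReal ((1+|s|) ^ (-(1+β)))) ≤ ENNReal.ofReal (2 + 2/β)) :
    (∫⁻ s : ℝ, ENNReal.ofReal ((1+|s|) ^ (-(1+β)) * hcut a s))
      ≤ ENNReal.ofReal ((8 + 4/β) * Real.log (1 + 1/a)) := by
  have hlog : 0 ≤ Real.log (1 + 1/a) := Real.log_nonneg (by nlinarith [one_div_pos.mpr ha])
  have hkey : ∀ s : ℝ, ENNReal.ofReal ((1+|s|) ^ (-(1+β)) * hcut a s)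
      ≤ (Icc (-1:ℝ) 1).indicator (fun t => ENNReal.ofReal (2 * (a + |t|)⁻¹)) s
        + ENNReal.ofReal ((2 * (a+1)⁻¹) * ((1+|s|) ^ (-(1+β)))) := by
    intro s
    have hqle1 : (1+|s|) ^ (-(1+β)) ≤ 1 :=
      Real.rpow_le_one_of_one_le_of_nonpos (by simp [abs_nonneg]) (by linarith)
    have hqnn : 0 ≤ (1+|s|) ^ (-(1+β)) := Real.rpow_nonneg (by positivity) _
    rcases le_or_gt |s| 1 with h | h
    · refine le_trans ?_ (le_add_right le_rfl)
      rw [indicator_of_mem (show s ∈ Icc (-1:ℝ) 1 from abs_le.mp h)]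
      refine ENNReal.ofReal_le_ofReal ?_
      calc (1+|s|) ^ (-(1+β)) * hcut a s ≤ hcut a s :=
            mul_le_of_le_one_left (hcut_nonneg ha s) hqle1
        _ ≤ 2 * (a + |s|)⁻¹ := hcut_le ha s
    · refine le_trans ?_ (le_add_left le_rfl)
      refine ENNReal.ofReal_le_ofReal ?_
      have h1 : hcut a s ≤ 2 * (a+1)⁻¹ := by
        refine (hcut_le ha s).trans ?_
        have : (a + |s|)⁻¹ ≤ (a+1)⁻¹ := by
          apply inv_anti₀ (by linarith) (by linarith)
        linarith
      calc (1+|s|) ^ (-(1+β)) * hcut a s ≤ (1+|s|) ^ (-(1+β)) * (2 * (a+1)⁻¹) :=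
            mul_le_mul_of_nonneg_left h1 hqnn
        _ = (2 * (a+1)⁻¹) * ((1+|s|) ^ (-(1+β))) := by ring
  refine le_trans (lintegral_mono hkey) ?_
  have hcont : Continuous fun t : ℝ => 2 * (a + |t|)⁻¹ :=
    continuous_const.mul ((continuous_const.add continuous_abs).inv₀ fun t =>
      (add_pos_of_pos_of_nonneg ha (abs_nonneg t)).ne')
  rw [lintegral_add_left ((hcont.measurable.ennreal_ofReal).indicator measurableSet_Icc)]
  have T1 : (∫⁻ s : ℝ, (Icc (-1:ℝ) 1).indicator
        (fun t => ENNReal.ofReal (2 * (a + |t|)⁻¹)) s)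
      = ENNReal.ofReal (4 * Real.log (1 + 1/a)) := by
    rw [lintegral_indicator measurableSet_Icc,
      ← ofReal_integral_eq_lintegral_ofReal (hcont.integrableOn_Icc)
        (ae_of_all _ fun t => by positivity), mid_int ha]
  have T2 : (∫⁻ s : ℝ, ENNReal.ofReal ((2 * (a+1)⁻¹) * ((1+|s|) ^ (-(1+β)))))
      ≤ ENNReal.ofReal ((2 * (a+1)⁻¹) * (2 + 2/β)) := by
    have e : ∀ s : ℝ, ENNReal.ofReal ((2 * (a+1)⁻¹) * ((1+|s|) ^ (-(1+β))))
        = ENNReal.ofReal (2 * (a+1)⁻¹) * ENNReal.ofReal ((1+|s|) ^ (-(1+β))) := fun s =>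
      ENNReal.ofReal_mul (by positivity)
    simp_rw [e]
    rw [lintegral_const_mul' _ _ ENNReal.ofReal_ne_top]
    exact le_trans (mul_le_mul_right hq _) (le_of_eq (ENNReal.ofReal_mul (by positivity)).symm)
  refine le_trans (add_le_add T1.le T2) ?_
  rw [← ENNReal.ofReal_add (by positivity) (by positivity)]
  refine ENNReal.ofReal_le_ofReal ?_
  have hinv := inv_add_one_le_log ha
  have key2 : 2 * (a+1)⁻¹ * (2+2/β) ≤ 2 * Real.log (1+1/a) * (2+2/β) := by
    apply mul_le_mul_of_nonneg_right _ (by positivity)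
    linarith
  calc 4 * Real.log (1 + 1/a) + 2 * (a+1)⁻¹ * (2+2/β)
      ≤ 4 * Real.log (1 + 1/a) + 2 * Real.log (1+1/a) * (2+2/β) := by linarith
    _ = (8 + 4/β) * Real.log (1 + 1/a) := by ring

lemma dot3_self_nonneg (v : V3) : 0 ≤ dot3 v v := by
  unfold dot3; nlinarith [mul_self_nonneg (v 0), mul_self_nonneg (v 1), mul_self_nonneg (v 2)]

lemma jap_pos (v : V3) : 0 < jap v :=
  Real.sqrt_pos.mpr (by linarith [dot3_self_nonneg v])

lemma jap_ge_one (v : V3) : 1 ≤ jap v := by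
  rw [show (1:ℝ) = Real.sqrt 1 from (Real.sqrt_one).symm]
  exact Real.sqrt_le_sqrt (by linarith [dot3_self_nonneg v])

lemma stepA (E B : ℝ × V3 → V3) (Ee g : ℝ) (t : ℝ) (x v : V3) (hx : 0 < x 2)
    (hD : 0 ≤ g - Ee - E (t, proj0 x) 2 - cross3 (vhat v) (B (t, proj0 x)) 2) :
    (kinWeight E B Ee g t x v)⁻¹ ≤ jap v * hcut (x 2) (v 2) := by
  set D := g - Ee - E (t, proj0 x) 2 - cross3 (vhat v) (B (t, proj0 x)) 2 with hDdef
  have hjp := jap_pos v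
  have h3 : 0 ≤ 2 * D * x 2 / jap v := by
    apply div_nonneg _ hjp.le
    nlinarith
  have hx2 : kinWeight E B Ee g t x v ≥ x 2 :=
    calc x 2 = Real.sqrt ((x 2)^2) := (Real.sqrt_sq hx.le).symm
      _ ≤ kinWeight E B Ee g t x v :=
        Real.sqrt_le_sqrt (by nlinarith [sq_nonneg (vhat v 2)])
  have hv3 : kinWeight E B Ee g t x v ≥ |vhat v 2| :=
    calc |vhat v 2| = Real.sqrt ((vhat v 2)^2) := (Real.sqrt_sq_eq_abs _).symm
      _ ≤ kinWeight E B Ee g t x v :=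
        Real.sqrt_le_sqrt (by nlinarith [sq_nonneg (x 2)])
  have hvh : |vhat v 2| = |v 2| / jap v := by
    show |(jap v)⁻¹ • v 2| = _
    rw [smul_eq_mul, abs_mul, abs_inv, abs_of_pos hjp]
    ring
  unfold hcut
  split
  · calc (kinWeight E B Ee g t x v)⁻¹ ≤ (x 2)⁻¹ := inv_anti₀ hx hx2
      _ ≤ jap v * (x 2)⁻¹ := le_mul_of_one_le_left (by positivity) (jap_ge_one v)
  · next h =>
      push_neg at h
      have hv2pos : 0 < |v 2| := lt_trans hx h
      have hpos : 0 < |v 2| / jap v := by positivity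
      calc (kinWeight E B Ee g t x v)⁻¹ ≤ (|v 2| / jap v)⁻¹ :=
            inv_anti₀ hpos (hvh ▸ hv3)
        _ = jap v * |v 2|⁻¹ := by rw [inv_div]; ring

lemma enorm3_nonneg (v : V3) : 0 ≤ enorm3 v := Real.sqrt_nonneg _

lemma abs_le_enorm3 (v : V3) (i : Fin 3) : |v i| ≤ enorm3 v := by
  rw [show |v i| = Real.sqrt ((v i)^2) from (Real.sqrt_sq_eq_abs _).symm]
  apply Real.sqrt_le_sqrt
  unfold dot3
  fin_cases i
  · show (v 0)^2 ≤ _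
    nlinarith [mul_self_nonneg (v 0), mul_self_nonneg (v 1), mul_self_nonneg (v 2)]
  · show (v 1)^2 ≤ _
    nlinarith [mul_self_nonneg (v 0), mul_self_nonneg (v 1), mul_self_nonneg (v 2)]
  · show (v 2)^2 ≤ _
    nlinarith [mul_self_nonneg (v 0), mul_self_nonneg (v 1), mul_self_nonneg (v 2)]

lemma jap_le (v : V3) : jap v ≤ 1 + enorm3 v := by
  have h1 : dot3 v v = (enorm3 v)^2 := (Real.sq_sqrt (dot3_self_nonneg v)).symm
  calc jap v = Real.sqrt (1 + dot3 v v) := rfl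
    _ ≤ Real.sqrt ((1 + enorm3 v)^2) :=
      Real.sqrt_le_sqrt (by nlinarith [enorm3_nonneg v])
    _ = 1 + enorm3 v := Real.sqrt_sq (by linarith [enorm3_nonneg v])

lemma stepB {δ : ℝ} (hδ : 0 < δ) (v : V3) :
    (1 + enorm3 v ^ (4 + δ))⁻¹ * jap v
      ≤ (2:ℝ) ^ (4+δ) * ((1+|v 0|) ^ (-(1+δ/4))
          * ((1+|v 1|) ^ (-(1+δ/4)) * (1+|v 2|) ^ (-(1+δ/2)))) := by
  set r := enorm3 v with hrdef
  have hr0 : 0 ≤ r := enorm3_nonneg v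
  have hp : (0:ℝ) < 4 + δ := by linarith
  have hrp : 0 ≤ r ^ (4+δ) := Real.rpow_nonneg hr0 _
  have key1 : (1+r) ^ (4+δ) ≤ 2 ^ (4+δ) * (1 + r ^ (4+δ)) := by
    rcases le_or_gt r 1 with h | h
    · calc (1+r) ^ (4+δ) ≤ (2:ℝ) ^ (4+δ) :=
            Real.rpow_le_rpow (by linarith) (by linarith) hp.le
        _ ≤ 2 ^ (4+δ) * (1 + r ^ (4+δ)) :=
            le_mul_of_one_le_right (by positivity) (by linarith)
    · calc (1+r) ^ (4+δ) ≤ (2*r) ^ (4+δ) :=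
            Real.rpow_le_rpow (by linarith) (by linarith) hp.le
        _ = 2 ^ (4+δ) * r ^ (4+δ) := Real.mul_rpow (by norm_num) hr0
        _ ≤ 2 ^ (4+δ) * (1 + r ^ (4+δ)) :=
            mul_le_mul_of_nonneg_left (by linarith) (by positivity)
  have key2 : (1 + r ^ (4+δ))⁻¹ ≤ 2 ^ (4+δ) / (1+r) ^ (4+δ) := by
    rw [le_div_iff₀ (by positivity), inv_mul_le_iff₀ (by positivity)]
    nlinarith [key1]
  have key3 : (1 + r ^ (4+δ))⁻¹ * jap v ≤ (2 ^ (4+δ) / (1+r) ^ (4+δ)) * (1+r) := by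
    apply mul_le_mul key2 (jap_le v) (jap_pos v).le (by positivity)
  have key4 : (2 ^ (4+δ) / (1+r) ^ (4+δ)) * (1+r) = 2 ^ (4+δ) * (1+r) ^ (-(3+δ)) := by
    rw [div_mul_eq_mul_div, mul_div_assoc]
    congr 1
    rw [show -(3+δ) = 1 - (4+δ) by ring, Real.rpow_sub (by positivity), Real.rpow_one]
  have key5 : (1+r) ^ (-(3+δ))
      = (1+r) ^ (-(1+δ/4)) * ((1+r) ^ (-(1+δ/4)) * (1+r) ^ (-(1+δ/2))) := by
    rw [← Real.rpow_add (by positivity), ← Real.rpow_add (by positivity)]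
    congr 1
    ring
  have hfac : ∀ e : ℝ, e ≤ 0 → ∀ i : Fin 3, (1+r) ^ e ≤ (1+|v i|) ^ e := fun e he i =>
    Real.rpow_le_rpow_of_nonpos (by positivity) (by linarith [abs_le_enorm3 v i]) he
  calc (1 + r ^ (4+δ))⁻¹ * jap v
      ≤ (2 ^ (4+δ) / (1+r) ^ (4+δ)) * (1+r) := key3
    _ = 2 ^ (4+δ) * ((1+r) ^ (-(1+δ/4)) * ((1+r) ^ (-(1+δ/4)) * (1+r) ^ (-(1+δ/2)))) := by
        rw [key4, key5]
    _ ≤ (2:ℝ) ^ (4+δ) * ((1+|v 0|) ^ (-(1+δ/4))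
          * ((1+|v 1|) ^ (-(1+δ/4)) * (1+|v 2|) ^ (-(1+δ/2)))) := by
        apply mul_le_mul_of_nonneg_left _ (by positivity)
        apply mul_le_mul (hfac _ (by linarith) 0) _ (by positivity) (by positivity)
        apply mul_le_mul (hfac _ (by linarith) 1) (hfac _ (by linarith) 2)
          (by positivity) (by positivity)

/-- local-to-nonlocal estimate for the kinetic weight, velocity-decay
version; the constant `C` depends only on `δ`. -/
theorem kinetic_weight_integral_decay (δ : ℝ) (hδ : 0 < δ) :
    ∃ C : ℝ, 0 < C ∧
      ∀ (g Ee : ℝ) (E B : ℝ × V3 → V3) (t : ℝ) (x : V3),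
        0 < g → 0 < x 2 →
        (∀ v : V3, 0 ≤ g - Ee - E (t, proj0 x) 2 - cross3 (vhat v) (B (t, proj0 x)) 2) →
        (∫⁻ v : V3,
            ENNReal.ofReal ((1 + enorm3 v ^ (4 + δ))⁻¹ * (kinWeight E B Ee g t x v)⁻¹))
          ≤ ENNReal.ofReal (C * Real.log (1 + 1 / x 2)) := by
  refine ⟨(2:ℝ) ^ (4+δ) * ((2 + 2/(δ/4)) * ((2 + 2/(δ/4)) * (8 + 4/(δ/2)))), by positivity, ?_⟩
  intro g Ee E B t x hg hx hD
  have hδ4 : (0:ℝ) < δ/4 := by linarith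
  have hδ2 : (0:ℝ) < δ/2 := by linarith
  set F0 : ℝ → ENNReal := fun s => ENNReal.ofReal ((1+|s|) ^ (-(1+δ/4))) with hF0def
  set F2 : ℝ → ENNReal := fun s => ENNReal.ofReal ((1+|s|) ^ (-(1+δ/2)) * hcut (x 2) s)
    with hF2def
  have hpt : ∀ v : V3,
      ENNReal.ofReal ((1 + enorm3 v ^ (4 + δ))⁻¹ * (kinWeight E B Ee g t x v)⁻¹)
        ≤ ENNReal.ofReal ((2:ℝ) ^ (4+δ)) * (F0 (v 0) * (F0 (v 1) * F2 (v 2))) := by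
    intro v
    have hA : 0 ≤ (1 + enorm3 v ^ (4 + δ))⁻¹ :=
      inv_nonneg.mpr (by linarith [Real.rpow_nonneg (enorm3_nonneg v) (4+δ)])
    have hreal : (1 + enorm3 v ^ (4 + δ))⁻¹ * (kinWeight E B Ee g t x v)⁻¹
        ≤ (2:ℝ) ^ (4+δ) * ((1+|v 0|) ^ (-(1+δ/4))
            * ((1+|v 1|) ^ (-(1+δ/4)) * ((1+|v 2|) ^ (-(1+δ/2)) * hcut (x 2) (v 2)))) := by
      calc (1 + enorm3 v ^ (4 + δ))⁻¹ * (kinWeight E B Ee g t x v)⁻¹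
          ≤ (1 + enorm3 v ^ (4 + δ))⁻¹ * (jap v * hcut (x 2) (v 2)) :=
            mul_le_mul_of_nonneg_left (stepA E B Ee g t x v hx (hD v)) hA
        _ = ((1 + enorm3 v ^ (4 + δ))⁻¹ * jap v) * hcut (x 2) (v 2) := by ring
        _ ≤ ((2:ℝ) ^ (4+δ) * ((1+|v 0|) ^ (-(1+δ/4))
              * ((1+|v 1|) ^ (-(1+δ/4)) * (1+|v 2|) ^ (-(1+δ/2))))) * hcut (x 2) (v 2) :=
            mul_le_mul_of_nonneg_right (stepB hδ v) (hcut_nonneg hx _)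
        _ = _ := by ring
    refine le_trans (ENNReal.ofReal_le_ofReal hreal) (le_of_eq ?_)
    rw [ENNReal.ofReal_mul (by positivity), ENNReal.ofReal_mul (by positivity),
      ENNReal.ofReal_mul (by positivity)]
  refine le_trans (lintegral_mono hpt) ?_
  rw [lintegral_const_mul' _ _ ENNReal.ofReal_ne_top]
  have hpi : (∫⁻ v : V3, F0 (v 0) * (F0 (v 1) * F2 (v 2)))
      = (∫⁻ s, F0 s) * (∫⁻ s, F0 s) * (∫⁻ s, F2 s) := by
    rw [← lintegral_pi3 F0 F0 F2 ((q_meas (δ/4)).ennreal_ofReal)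
      ((q_meas (δ/4)).ennreal_ofReal) (((q_meas (δ/2)).mul (hcut_meas (x 2))).ennreal_ofReal)]
    simp_rw [mul_assoc]
  rw [hpi]
  have b0 : (∫⁻ s, F0 s) ≤ ENNReal.ofReal (2 + 2/(δ/4)) := q_lint hδ4
  have b2 : (∫⁻ s, F2 s) ≤ ENNReal.ofReal ((8 + 4/(δ/2)) * Real.log (1 + 1/(x 2))) :=
    main1d hδ2 hx (q_lint hδ2)
  refine le_trans (mul_le_mul_right (mul_le_mul' (mul_le_mul' b0 b0) b2) _) ?_
  rw [← ENNReal.ofReal_mul (by positivity), ← ENNReal.ofReal_mul (by positivity),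
    ← ENNReal.ofReal_mul (by positivity)]
  exact ENNReal.ofReal_le_ofReal (le_of_eq (by ring))
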